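/- Let d ≥ 1, t > 1, and let φ: ℝ^d → ℝ be bounded and continuous. For s > 0 define the c-transform φ^c_s(y) = inf over x ∈ ℝ^d of |x−y|²/(2s) − φ(x), and write φ^c = φ^c_1. Then for every x ∈ ℝ^d, −[φ^c_t]^c(x) ≤ φ^c_{t−1}(x). -/
import Mathlib


noncomputable section

abbrev EucSp (d : ℕ) := EuclideanSpace ℝ (Fin d)

/-- The `c`-transform with quadratic cost rescaled by `2s`:
`φ^c_s(y) = inf_x (|x-y|²/(2s) - φ(x))`. -/
noncomputable def ctrans {d : ℕ} (s : ℝ) (φ : EucSp d → ℝ) (y : EucSp d) : ℝ :=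
  ⨅ x : EucSp d, (‖x - y‖ ^ 2 / (2 * s) - φ x)

/-- `-[φ^c_t]^c ≤ φ^c_{t-1}` pointwise. -/
theorem stmt_6 {d : ℕ} (hd : 1 ≤ d) {t : ℝ} (ht : 1 < t)
    (φ : EucSp d → ℝ) (hcont : Continuous φ) (hbdd : ∃ M : ℝ, ∀ x, |φ x| ≤ M) :
    ∀ x : EucSp d, -(ctrans 1 (ctrans t φ) x) ≤ ctrans (t - 1) φ x := by
  obtain ⟨M, hM⟩ := hbdd
  intro x
  rw [neg_le]
  rw [ctrans]
  apply le_ciInf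
  intro y
  rw [neg_le, neg_sub]
  rw [ctrans]
  have hbb : BddBelow (Set.range fun z : EucSp d => ‖z - y‖ ^ 2 / (2 * t) - φ z) := by
    refine ⟨-M, ?_⟩
    rintro _ ⟨z, rfl⟩
    have h1 : 0 ≤ ‖z - y‖ ^ 2 / (2 * t) := by positivity
    have := (abs_le.mp (hM z)).2
    simp only
    linarith
  have key : ∀ z, ctrans t φ y - ‖y - x‖ ^ 2 / (2 * 1) ≤ ‖z - x‖ ^ 2 / (2 * (t - 1)) - φ z := by
    intro z
    have h1 : ctrans t φ y ≤ ‖z - y‖ ^ 2 / (2 * t) - φ z := ciInf_le hbb z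
    have htri : ‖z - x‖ ≥ ‖z - y‖ - ‖y - x‖ := by
      have := norm_sub_le (z - x) (y - x)
      have h2 : z - x - (y - x) = z - y := by abel
      rw [h2] at this
      linarith
    set a := ‖z - y‖ with ha
    set b := ‖y - x‖ with hb
    set c := ‖z - x‖ with hc
    have ha0 : 0 ≤ a := norm_nonneg _
    have hb0 : 0 ≤ b := norm_nonneg _
    have hc0 : 0 ≤ c := norm_nonneg _
    have ht1 : 0 < t - 1 := by linarith
    have ht0 : 0 < t := by linarith
    have ineq : a ^ 2 / (2 * t) - b ^ 2 / (2 * 1) ≤ c ^ 2 / (2 * (t - 1)) := by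
      rw [div_sub_div _ _ (by positivity) (by positivity), div_le_div_iff₀ (by positivity) (by positivity)]
      rcases le_or_gt a b with hab | hab
      · have h2 : a ^ 2 ≤ b ^ 2 := by nlinarith
        have h3 : 0 ≤ t * b ^ 2 - a ^ 2 := by nlinarith
        nlinarith [mul_nonneg ht1.le h3, mul_nonneg ht0.le (sq_nonneg c)]
      · have hcab : c ^ 2 ≥ (a - b) ^ 2 := by nlinarith
        nlinarith [sq_nonneg (a - t * b)]
    linarith
  -- conclude: ctrans t φ y - ‖y-x‖²/2 ≤ ⨅ z, ...
  have : ctrans t φ y - ‖y - x‖ ^ 2 / (2 * 1) ≤ ⨅ z : EucSp d, (‖z - x‖ ^ 2 / (2 * (t - 1)) - φ z) :=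
    le_ciInf key
  simp only [ctrans] at this ⊢
  linarith
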